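/- Let g be a finite-dimensional real nilpotent Lie algebra with Jordan–Hölder basis (X₁,…,X_m) compatible with the flag Fⱼ = span{X₁,…,Xⱼ}, and fix a partition {1,…,m} = A₁ ⊔ ⋯ ⊔ A_k. Define Φ(t₁,…,t_m) := (Σ_{j∈A₁} tⱼXⱼ) · ⋯ · (Σ_{j∈A_k} tⱼXⱼ), where · is the Baker–Campbell–Hausdorff multiplication on g. Then there exist polynomial functions Pⱼ : ℝ^{m−j} → ℝ such that Φ(t₁,…,t_m) = Σⱼ₌₁^m (tⱼ + Pⱼ(t_{j+1},…,t_m)) Xⱼ for all t ∈ ℝ^m. In particular, Φ : ℝ^m → g is a bijection with polynomial inverse. -/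

import Mathlib

/-- `mul` is the Baker–Campbell–Hausdorff multiplication of the (nilpotent) Lie
algebra `g`: it is a group law, polynomial in the coordinates with respect to a
basis, satisfies `(t•X)·(s•X) = (t+s)•X`, and its second-order term recovers
the Lie bracket (`mul (t•X) (t•Y) = t•X + t•Y + (t²/2)•⁅X,Y⁆ + O(t³)`). -/
def IsBCHMul (g : Type*) [LieRing g] [LieAlgebra ℝ g] (mul : g → g → g) : Prop :=
  (∀ X Y Z : g, mul (mul X Y) Z = mul X (mul Y Z)) ∧
  (∀ X : g, mul 0 X = X) ∧
  (∀ X : g, mul X 0 = X) ∧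
  (∀ X : g, mul X (-X) = 0) ∧
  (∀ (t s : ℝ) (X : g), mul (t • X) (s • X) = (t + s) • X) ∧
  (∃ (d : ℕ) (b : Module.Basis (Fin d) ℝ g) (Q : Fin d → MvPolynomial (Fin d ⊕ Fin d) ℝ),
    ∀ (X Y : g) (i : Fin d),
      b.repr (mul X Y) i =
        MvPolynomial.eval (Sum.elim (fun j => b.repr X j) (fun j => b.repr Y j)) (Q i)) ∧
  (∀ X Y : g, ∃ (N : ℕ) (c : ℕ → g), ∀ t : ℝ,
    mul (t • X) (t • Y) =
      t • X + t • Y + (t ^ 2 / 2) • ⁅X, Y⁆ + ∑ i ∈ Finset.range N, t ^ (i + 3) • c i)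



set_option linter.unusedSectionVars false
namespace BCHaux

open Polynomial in
lemma eval_aeval_poly {σ : Type*} (φ : MvPolynomial σ ℝ) (f : σ → Polynomial ℝ) (t : ℝ) :
    Polynomial.eval t (MvPolynomial.aeval f φ) =
      MvPolynomial.eval (fun a => Polynomial.eval t (f a)) φ := by
  induction φ using MvPolynomial.induction_on with
  | C a => simp
  | add p q hp hq => simp [hp, hq]
  | mul_X p i hp => simp [hp]

lemma eval_aeval_mv {σ τ : Type*} (φ : MvPolynomial σ ℝ) (f : σ → MvPolynomial τ ℝ)
    (v : τ → ℝ) :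
    MvPolynomial.eval v (MvPolynomial.aeval f φ) =
      MvPolynomial.eval (fun a => MvPolynomial.eval v (f a)) φ := by
  induction φ using MvPolynomial.induction_on with
  | C a => simp
  | add p q hp hq => simp only [map_add]; rw [hp, hq]
  | mul_X p i hp => simp only [map_mul, MvPolynomial.aeval_X, MvPolynomial.eval_X]; rw [hp]

lemma eval_bind₁ {σ τ : Type*} (φ : MvPolynomial σ ℝ) (f : σ → MvPolynomial τ ℝ)
    (v : τ → ℝ) :
    MvPolynomial.eval v (MvPolynomial.bind₁ f φ) =
      MvPolynomial.eval (fun a => MvPolynomial.eval v (f a)) φ :=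
  eval_aeval_mv φ f v

lemma dvd_aeval_sub {σ : Type*} (φ : MvPolynomial σ ℝ) (f g : σ → Polynomial ℝ)
    (d : Polynomial ℝ) (h : ∀ i, d ∣ (f i - g i)) :
    d ∣ (MvPolynomial.aeval f φ - MvPolynomial.aeval g φ) := by
  induction φ using MvPolynomial.induction_on with
  | C a => simp
  | add p q hp hq =>
    have heq : (MvPolynomial.aeval f) (p + q) - (MvPolynomial.aeval g) (p + q)
        = ((MvPolynomial.aeval f) p - (MvPolynomial.aeval g) p)
          + ((MvPolynomial.aeval f) q - (MvPolynomial.aeval g) q) := by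
      simp; ring
    rw [heq]; exact dvd_add hp hq
  | mul_X p i hp =>
    have heq : (MvPolynomial.aeval f) (p * MvPolynomial.X i)
          - (MvPolynomial.aeval g) (p * MvPolynomial.X i)
        = ((MvPolynomial.aeval f) p - (MvPolynomial.aeval g) p) * f i
          + (MvPolynomial.aeval g) p * (f i - g i) := by
      simp; ring
    rw [heq]
    exact dvd_add (hp.mul_right _) ((h i).mul_left _)

lemma eval_congr_vars {σ : Type*} (φ : MvPolynomial σ ℝ) (f g : σ → ℝ)
    (h : ∀ i ∈ φ.vars, f i = g i) :
    MvPolynomial.eval f φ = MvPolynomial.eval g φ := by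
  classical
  rw [MvPolynomial.eval_eq, MvPolynomial.eval_eq]
  apply Finset.sum_congr rfl
  intro d hd
  congr 1
  apply Finset.prod_congr rfl
  intro i hi
  have hv : i ∈ φ.vars := by
    rw [MvPolynomial.mem_vars]
    exact ⟨d, hd, hi⟩
  rw [h i hv]

lemma aeval_mem_supported {σ : Type*} (s : Set σ) (φ : MvPolynomial σ ℝ)
    (f : σ → MvPolynomial σ ℝ) (hf : ∀ i, f i ∈ MvPolynomial.supported ℝ s) :
    MvPolynomial.aeval f φ ∈ MvPolynomial.supported ℝ s := by
  induction φ using MvPolynomial.induction_on with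
  | C a =>
    have h : (MvPolynomial.aeval f) (MvPolynomial.C a : MvPolynomial σ ℝ) = MvPolynomial.C a := by
      simp
    rw [h]
    exact (MvPolynomial.supported ℝ s).algebraMap_mem a
  | add p q hp hq => simpa using add_mem hp hq
  | mul_X p i hp => simpa using mul_mem hp (hf i)

section Step

variable {n : ℕ} (ν : (Fin n → ℝ) → (Fin n → ℝ) → (Fin n → ℝ))

/-- polynomial curve with explicit representation -/
def PC (f : ℝ → (Fin n → ℝ)) (p : Fin n → Polynomial ℝ) : Prop :=
  ∀ t l, f t l = Polynomial.eval t (p l)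

variable (H1 : ∀ x y z, ν (ν x y) z = ν x (ν y z))
  (H2 : ∀ x, ν 0 x = x) (H3 : ∀ x, ν x 0 = x) (H4 : ∀ x, ν x (-x) = 0)

section basics
include H1 H2 H3 H4

lemma inv_left : ∀ x, ν (-x) x = 0 := fun x => by simpa using H4 (-x)

lemma cancel₄ : ∀ z w, ν (-z) (ν z w) = w := fun z w => by
  rw [← H1, inv_left ν H1 H2 H3 H4, H2]

lemma cancel₃ : ∀ z w, ν z (ν (-z) w) = w := fun z w => by rw [← H1, H4, H2]

lemma cancel₁ : ∀ w z, ν (ν w z) (-z) = w := fun w z => by rw [H1, H4, H3]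

lemma cancel₂ : ∀ w z, ν (ν w (-z)) z = w := fun w z => by
  rw [H1, inv_left ν H1 H2 H3 H4, H3]

lemma lcancel : ∀ z u w, ν z u = ν z w → u = w := fun z u w h => by
  have h2 := congrArg (ν (-z)) h
  rwa [cancel₄ ν H1 H2 H3 H4, cancel₄ ν H1 H2 H3 H4] at h2

end basics

lemma compPC (Q : Fin n → MvPolynomial (Fin n ⊕ Fin n) ℝ)
    (H6 : ∀ x y l, ν x y l = MvPolynomial.eval (Sum.elim x y) (Q l))
    (f g : ℝ → (Fin n → ℝ)) (pf pg : Fin n → Polynomial ℝ)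
    (hf : PC f pf) (hg : PC g pg) :
    PC (fun t => ν (f t) (g t)) (fun l => MvPolynomial.aeval (Sum.elim pf pg) (Q l)) := by
  intro t l
  show ν (f t) (g t) l = Polynomial.eval t (MvPolynomial.aeval (Sum.elim pf pg) (Q l))
  rw [H6, eval_aeval_poly]
  have : (Sum.elim (f t) (g t) : Fin n ⊕ Fin n → ℝ)
      = fun a => Polynomial.eval t (Sum.elim pf pg a) := by
    funext a
    cases a with
    | inl a => simp [hf t a]
    | inr a => simp [hg t a]
  rw [this]

include H1 H2 H3 H4 in
lemma L3 (H5 : ∀ (t s : ℝ) (x : Fin n → ℝ), ν (t • x) (s • x) = (t + s) • x)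
    (γ : ℝ → (Fin n → ℝ)) (p : Fin n → Polynomial ℝ) (hp : PC γ p)
    (hhom : ∀ a b : ℝ, γ (a + b) = ν (γ a) (γ b)) :
    ∀ t : ℝ, γ t = t • γ 1 := by
  have hγ0 : γ 0 = 0 := by
    have h := hhom 0 0
    rw [add_zero] at h
    have h2 : ν (γ 0) (γ 0) = ν (γ 0) 0 := by rw [← h, H3]
    exact lcancel ν H1 H2 H3 H4 _ _ _ h2
  have hnat : ∀ N : ℕ, γ (N : ℝ) = (N : ℝ) • γ 1 := by
    intro N
    induction N with
    | zero => simpa using hγ0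
    | succ N ih =>
      have h2 : γ ((N : ℝ) + 1) = ν ((N:ℝ) • γ 1) ((1:ℝ) • γ 1) := by
        rw [hhom, ih, one_smul]
      rw [H5] at h2
      push_cast
      simpa using h2
  have hpoly : ∀ l, p l = Polynomial.C (γ 1 l) * Polynomial.X := by
    intro l
    apply Polynomial.eq_of_infinite_eval_eq
    apply Set.Infinite.mono (s := Set.range ((↑) : ℕ → ℝ))
    · rintro x ⟨N, rfl⟩
      simp only [Set.mem_setOf_eq, Polynomial.eval_mul, Polynomial.eval_C, Polynomial.eval_X]
      rw [← hp, hnat N]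
      simp [mul_comm]
    · exact Set.infinite_range_of_injective Nat.cast_injective
  intro t
  funext l
  rw [show (t • γ 1) l = γ 1 l * t by simp [mul_comm], hp t l, hpoly l]
  simp

/-- group conjugation -/
def conj (z w : Fin n → ℝ) : Fin n → ℝ := ν (ν z w) (-z)

include H1 H2 H3 H4

lemma conj_zero_left : ∀ w, conj ν 0 w = w := by
  intro w
  unfold conj
  rw [H2, neg_zero, H3]

lemma conj_zero_right : ∀ z, conj ν z 0 = 0 := by
  intro z
  unfold conj
  rw [H3, H4]

lemma conj_hom : ∀ z u v, conj ν z (ν u v) = ν (conj ν z u) (conj ν z v) := by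
  intro z u v
  unfold conj
  have inner : ν (-z) (ν (ν z v) (-z)) = ν v (-z) := by
    rw [← H1, cancel₄ ν H1 H2 H3 H4]
  rw [H1 (ν z u) (-z) (ν (ν z v) (-z)), inner, ← H1 (ν z u) v (-z), H1 z u v]

lemma neg_mul : ∀ z z', -(ν z z') = ν (-z') (-z) := by
  intro z z'
  apply lcancel ν H1 H2 H3 H4 (ν z z')
  rw [H4, H1, cancel₃ ν H1 H2 H3 H4, H4]

lemma conj_comp : ∀ z z' w, conj ν (ν z z') w = conj ν z (conj ν z' w) := by
  intro z z' w
  unfold conj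
  rw [neg_mul ν H1 H2 H3 H4, H1 z z' w,
    H1 z (ν z' w) (ν (-z') (-z)), ← H1 (ν z' w) (-z') (-z), ← H1 z (ν (ν z' w) (-z')) (-z)]

omit H1 H2 H3 H4

lemma PC_const (c : Fin n → ℝ) : PC (fun _ => c) (fun l => Polynomial.C (c l)) := by
  intro t l; simp

lemma PC_smul (x : Fin n → ℝ) (a : ℝ) :
    PC (fun t => (a * t) • x) (fun l => Polynomial.C (a * x l) * Polynomial.X) := by
  intro t l; simp [Pi.smul_apply]; ring

include H1 H2 H3 H4

lemma conj_line (H5 : ∀ (t s : ℝ) (x : Fin n → ℝ), ν (t • x) (s • x) = (t + s) • x)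
    (Q : Fin n → MvPolynomial (Fin n ⊕ Fin n) ℝ)
    (H6 : ∀ x y l, ν x y l = MvPolynomial.eval (Sum.elim x y) (Q l))
    (e : Fin n → ℝ) :
    ∀ (z : Fin n → ℝ) (s : ℝ), conj ν z (s • e) = s • conj ν z e := by
  intro z s
  have pc1 : PC (fun t => ν z (t • e))
      (fun l => MvPolynomial.aeval
        (Sum.elim (fun l' => Polynomial.C (z l')) (fun l' => Polynomial.C (1 * e l') * Polynomial.X)) (Q l)) := by
    have := compPC ν Q H6 (fun _ => z) (fun t => ((1:ℝ) * t) • e) _ _ (PC_const z) (PC_smul e 1)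
    simpa using this
  have pc2 : PC (fun t => conj ν z (t • e))
      (fun l => MvPolynomial.aeval
        (Sum.elim (fun l' => MvPolynomial.aeval
          (Sum.elim (fun l'' => Polynomial.C (z l'')) (fun l'' => Polynomial.C (1 * e l'') * Polynomial.X)) (Q l'))
          (fun l' => Polynomial.C ((-z) l'))) (Q l)) := by
    have := compPC ν Q H6 (fun t => ν z (t • e)) (fun _ => -z) _ _ pc1 (PC_const (-z))
    exact this
  have hhom : ∀ a b : ℝ, conj ν z ((a + b) • e) = ν (conj ν z (a • e)) (conj ν z (b • e)) := by
    intro a b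
    rw [← conj_hom ν H1 H2 H3 H4, H5]
  have := L3 ν H1 H2 H3 H4 H5 (fun t => conj ν z (t • e)) _ pc2 hhom
  have h1 := this s
  simpa using h1

omit H1 H2 H3 H4

lemma PC_smul' (x : Fin n → ℝ) :
    PC (fun t => t • x) (fun l => Polynomial.C (x l) * Polynomial.X) := by
  intro t l; simp [Pi.smul_apply]; ring

include H1 H2 H3 H4

lemma Wconst (H5 : ∀ (t s : ℝ) (x : Fin n → ℝ), ν (t • x) (s • x) = (t + s) • x)
    (Q : Fin n → MvPolynomial (Fin n ⊕ Fin n) ℝ)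
    (H6 : ∀ x y l, ν x y l = MvPolynomial.eval (Sum.elim x y) (Q l))
    (lam : (Fin n → ℝ) → (Fin n → ℝ) → (Fin n → ℝ))
    (H7 : ∀ x y, ∃ (N : ℕ) (c : ℕ → Fin n → ℝ), ∀ t : ℝ,
      ν (t • x) (t • y) = t • x + t • y + (t^2/2) • lam x y
        + ∑ i ∈ Finset.range N, t^(i+3) • c i)
    (e : Fin n → ℝ) (H8a : ∀ x, lam x e = 0) (H8c : ∀ x, lam (x + e) (-x) = 0) :
    ∀ x : Fin n → ℝ, conj ν x e = e := by
  intro x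
  set β : ℝ → (Fin n → ℝ) := fun t => conj ν (t • x) e with hβ
  -- polynomial representation of β
  have pcInner : PC (fun t => ν (t • x) e)
      (fun l => MvPolynomial.aeval
        (Sum.elim (fun l' => Polynomial.C (x l') * Polynomial.X)
          (fun l' => Polynomial.C (e l'))) (Q l)) :=
    compPC ν Q H6 _ _ _ _ (PC_smul' x) (PC_const e)
  have pcβ : PC β
      (fun l => MvPolynomial.aeval
        (Sum.elim
          (fun l' => MvPolynomial.aeval
            (Sum.elim (fun l'' => Polynomial.C (x l'') * Polynomial.X)
              (fun l'' => Polynomial.C (e l''))) (Q l'))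
          (fun l' => Polynomial.C ((-x) l') * Polynomial.X)) (Q l)) := by
    have h2 := compPC ν Q H6 (fun t => ν (t • x) e) (fun t => t • (-x)) _ _
      pcInner (PC_smul' (-x))
    intro t l
    have h3 : β t = ν (ν (t • x) e) (t • (-x)) := by
      rw [hβ]
      show conj ν (t • x) e = _
      unfold conj
      rw [smul_neg]
    rw [h3]
    exact h2 t l
  set p : Fin n → Polynomial ℝ := fun l => MvPolynomial.aeval
        (Sum.elim
          (fun l' => MvPolynomial.aeval
            (Sum.elim (fun l'' => Polynomial.C (x l'') * Polynomial.X)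
              (fun l'' => Polynomial.C (e l''))) (Q l'))
          (fun l' => Polynomial.C ((-x) l') * Polynomial.X)) (Q l) with hpdef
  have hβ0 : β 0 = e := by
    rw [hβ]
    show conj ν ((0:ℝ) • x) e = e
    rw [zero_smul]
    exact conj_zero_left ν H1 H2 H3 H4 e
  have hp0 : ∀ l, (p l).coeff 0 = e l := by
    intro l
    rw [Polynomial.coeff_zero_eq_eval_zero, ← pcβ 0 l, hβ0]
  -- the H7-based expansions
  obtain ⟨N, c, hc⟩ := H7 x e
  have hc' : ∀ t : ℝ, ν (t • x) (t • e) = t • x + t • e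
      + ∑ i ∈ Finset.range N, t^(i+3) • c i := by
    intro t
    have := hc t
    rwa [H8a, smul_zero, add_zero] at this
  obtain ⟨N', c', hc2⟩ := H7 (x + e) (-x)
  have hc2' : ∀ t : ℝ, ν (t • (x+e)) (t • (-x)) = t • e
      + ∑ i ∈ Finset.range N', t^(i+3) • c' i := by
    intro t
    have h := hc2 t
    rwa [H8c, smul_zero, add_zero, show t • (x+e) + t • (-x) = t • e by
      rw [smul_add, smul_neg]; abel] at h
  -- the two substitution families
  set f : (Fin n ⊕ Fin n) → Polynomial ℝ := Sum.elim
      (fun a => Polynomial.C ((x+e) a) * Polynomial.X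
        + ∑ i ∈ Finset.range N, Polynomial.C (c i a) * Polynomial.X^(i+3))
      (fun a => Polynomial.C ((-x) a) * Polynomial.X) with hfdef
  set gg : (Fin n ⊕ Fin n) → Polynomial ℝ := Sum.elim
      (fun a => Polynomial.C ((x+e) a) * Polynomial.X)
      (fun a => Polynomial.C ((-x) a) * Polynomial.X) with hgdef
  have hdiv : ∀ a, (Polynomial.X : Polynomial ℝ)^3 ∣ (f a - gg a) := by
    intro a
    cases a with
    | inl a =>
      simp only [hfdef, hgdef, Sum.elim_inl, add_sub_cancel_left]
      apply Finset.dvd_sum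
      intro i _
      rw [pow_add]
      exact Dvd.dvd.mul_left (dvd_mul_left _ _) _
    | inr a => simp [hfdef, hgdef]
  have hEvalF : ∀ (t : ℝ) l, Polynomial.eval t (MvPolynomial.aeval f (Q l))
      = ν (ν (t • x) (t • e)) (t • (-x)) l := by
    intro t l
    rw [eval_aeval_poly, H6]
    have harg : (fun a => Polynomial.eval t (f a))
        = Sum.elim (ν (t • x) (t • e)) (t • (-x)) := by
      funext a
      cases a with
      | inl a =>
        simp only [hfdef, Sum.elim_inl, Polynomial.eval_add, Polynomial.eval_mul,
          Polynomial.eval_C, Polynomial.eval_X, Polynomial.eval_finset_sum, Polynomial.eval_pow]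
        rw [hc' t]
        simp only [Pi.add_apply, Pi.smul_apply, smul_eq_mul, Finset.sum_apply]
        rw [show (∑ i ∈ Finset.range N, c i a * t ^ (i+3))
            = ∑ i ∈ Finset.range N, t ^ (i+3) * c i a from
          Finset.sum_congr rfl fun i _ => mul_comm _ _]
        ring
      | inr a =>
        simp only [hfdef, Sum.elim_inr, Polynomial.eval_mul, Polynomial.eval_C, Polynomial.eval_X]
        simp [Pi.smul_apply, mul_comm]
    rw [harg]
  have hEvalG : ∀ (t : ℝ) l, Polynomial.eval t (MvPolynomial.aeval gg (Q l))
      = ν (t • (x+e)) (t • (-x)) l := by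
    intro t l
    rw [eval_aeval_poly, H6]
    have harg : (fun a => Polynomial.eval t (gg a))
        = Sum.elim (t • (x+e)) (t • (-x)) := by
      funext a
      cases a with
      | inl a =>
        simp only [hgdef, Sum.elim_inl, Polynomial.eval_mul, Polynomial.eval_C, Polynomial.eval_X]
        simp [Pi.smul_apply, mul_comm]
      | inr a =>
        simp only [hgdef, Sum.elim_inr, Polynomial.eval_mul, Polynomial.eval_C, Polynomial.eval_X]
        simp [Pi.smul_apply, mul_comm]
    rw [harg]
  -- main polynomial identity forcing coeff 1 of p to vanish
  have hkey : ∀ l, Polynomial.X * p l = Polynomial.C (e l) * Polynomial.X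
      + ((MvPolynomial.aeval f (Q l) - MvPolynomial.aeval gg (Q l))
        + ∑ i ∈ Finset.range N', Polynomial.C (c' i l) * Polynomial.X^(i+3)) := by
    intro l
    apply Polynomial.funext
    intro t
    have lhs : Polynomial.eval t (Polynomial.X * p l) = t * β t l := by
      simp [← pcβ t l]
    have step1 : t * β t l = ν (ν (t • x) (t • e)) (t • (-x)) l := by
      have h4 : conj ν (t • x) (t • e) = t • β t := by
        rw [conj_line ν H1 H2 H3 H4 H5 Q H6 e (t • x) t]
      have h5 : conj ν (t • x) (t • e) = ν (ν (t • x) (t • e)) (t • (-x)) := by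
        unfold conj
        rw [smul_neg]
      rw [← h5, h4]
      simp
    rw [lhs, step1]
    have := hEvalF t l
    rw [← this]
    simp only [Polynomial.eval_add, Polynomial.eval_sub, Polynomial.eval_mul,
      Polynomial.eval_C, Polynomial.eval_X, Polynomial.eval_finset_sum, Polynomial.eval_pow]
    have h6 : Polynomial.eval t (MvPolynomial.aeval gg (Q l)) = t * e l
        + ∑ i ∈ Finset.range N', t^(i+3) * c' i l := by
      rw [hEvalG t l, hc2' t]
      simp only [Pi.add_apply, Pi.smul_apply, smul_eq_mul, Finset.sum_apply]
    rw [h6]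
    rw [show (∑ i ∈ Finset.range N', c' i l * t ^ (i+3))
        = ∑ i ∈ Finset.range N', t ^ (i+3) * c' i l from
      Finset.sum_congr rfl fun i _ => mul_comm _ _]
    ring
  have hp1 : ∀ l, (p l).coeff 1 = 0 := by
    intro l
    have h := congrArg (fun q => Polynomial.coeff q 2) (hkey l)
    simp only [Polynomial.coeff_X_mul] at h
    rw [h]
    have hd3 : (Polynomial.X : Polynomial ℝ)^3 ∣
        ((MvPolynomial.aeval f (Q l) - MvPolynomial.aeval gg (Q l))
        + ∑ i ∈ Finset.range N', Polynomial.C (c' i l) * Polynomial.X^(i+3)) := by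
      apply dvd_add
      · exact dvd_aeval_sub (Q l) f gg _ hdiv
      · apply Finset.dvd_sum
        intro i _
        rw [pow_add]
        exact Dvd.dvd.mul_left (dvd_mul_left _ _) _
    have hc2z := (Polynomial.X_pow_dvd_iff.mp hd3) 2 (by norm_num)
    simp only [Polynomial.coeff_add, hc2z]
    rw [Polynomial.coeff_C_mul, Polynomial.coeff_X]
    norm_num
  have hdvd2 : ∀ l, (Polynomial.X : Polynomial ℝ)^2 ∣ (p l - Polynomial.C (e l)) := by
    intro l
    rw [Polynomial.X_pow_dvd_iff]
    intro d hd
    interval_cases d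
    · simp [hp0 l]
    · simp [hp1 l]
  -- flow identity
  have hflow : ∀ t t' : ℝ, β (t + t') = conj ν (t • x) (β t') := by
    intro t t'
    rw [hβ]
    show conj ν ((t + t') • x) e = conj ν (t • x) (conj ν (t' • x) e)
    rw [← conj_comp ν H1 H2 H3 H4, H5]
  -- conclude : derivative of p vanishes everywhere
  have hder : ∀ (t : ℝ) l, Polynomial.eval t (Polynomial.derivative (p l)) = 0 := by
    intro t l
    -- conjugation by t•x as a polynomial map
    set CJ : Fin n → MvPolynomial (Fin n) ℝ := fun l' => MvPolynomial.aeval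
      (Sum.elim
        (fun a => MvPolynomial.aeval
          (Sum.elim (fun b => MvPolynomial.C ((t • x) b)) (fun b => MvPolynomial.X b)) (Q a))
        (fun a => MvPolynomial.C ((-(t • x)) a))) (Q l') with hCJdef
    have hCJ : ∀ (w : Fin n → ℝ) l', conj ν (t • x) w l' = MvPolynomial.eval w (CJ l') := by
      intro w l'
      show ν (ν (t • x) w) (-(t • x)) l' = _
      rw [H6, hCJdef, eval_aeval_mv]
      have harg : (Sum.elim (ν (t • x) w) (-(t • x)) : Fin n ⊕ Fin n → ℝ)
          = fun a => MvPolynomial.eval w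
              ((Sum.elim
                (fun a => MvPolynomial.aeval
                  (Sum.elim (fun b => MvPolynomial.C ((t • x) b)) (fun b => MvPolynomial.X b)) (Q a))
                (fun a => MvPolynomial.C ((-(t • x)) a))) a) := by
        funext a
        cases a with
        | inl a =>
          simp only [Sum.elim_inl]
          rw [eval_aeval_mv, H6]
          have harg2 : (Sum.elim (t • x) w : Fin n ⊕ Fin n → ℝ)
              = fun b => MvPolynomial.eval w
                  ((Sum.elim (fun b => MvPolynomial.C ((t • x) b)) (fun b => MvPolynomial.X b)) b) := by
            funext b
            cases b with
            | inl b => simp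
            | inr b => simp
          rw [harg2]
        | inr a => simp
      rw [harg]
    have htay : ∀ l', Polynomial.taylor t (p l') = MvPolynomial.aeval p (CJ l') := by
      intro l'
      apply Polynomial.funext
      intro t'
      rw [Polynomial.taylor_eval]
      conv_rhs => rw [eval_aeval_poly]
      have h7 : Polynomial.eval (t' + t) (p l') = β (t + t') l' := by
        rw [show t' + t = t + t' from add_comm t' t, ← pcβ (t + t') l']
      rw [h7, hflow t t', hCJ (β t') l']
      have harg3 : (β t') = fun a => Polynomial.eval t' (p a) := by
        funext a
        exact pcβ t' a
      rw [harg3]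
    have hconst : MvPolynomial.aeval (fun a => Polynomial.C (e a)) (CJ l)
        = Polynomial.C (β t l) := by
      apply Polynomial.funext
      intro t'
      rw [eval_aeval_poly]
      simp only [Polynomial.eval_C]
      rw [← hCJ e l]
    have hdvdCJ : (Polynomial.X : Polynomial ℝ)^2 ∣
        (MvPolynomial.aeval p (CJ l) - MvPolynomial.aeval (fun a => Polynomial.C (e a)) (CJ l)) :=
      dvd_aeval_sub (CJ l) _ _ _ (fun a => hdvd2 a)
    have hcoef : (Polynomial.taylor t (p l)).coeff 1 = 0 := by
      rw [htay l]
      have h8 : MvPolynomial.aeval p (CJ l) = Polynomial.C (β t l)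
          + (MvPolynomial.aeval p (CJ l) - MvPolynomial.aeval (fun a => Polynomial.C (e a)) (CJ l)) := by
        rw [hconst]; ring
      rw [h8, Polynomial.coeff_add, Polynomial.coeff_C]
      have h9 := (Polynomial.X_pow_dvd_iff.mp hdvdCJ) 1 (by norm_num)
      rw [h9]
      norm_num
    rwa [Polynomial.taylor_coeff_one] at hcoef
  have hpC : ∀ l, p l = Polynomial.C (e l) := by
    intro l
    have hd0 : Polynomial.derivative (p l) = 0 := by
      apply Polynomial.funext
      intro t
      rw [hder t l]
      simp
    ext d
    cases d with
    | zero => simpa using hp0 l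
    | succ d =>
      have := congrArg (fun q => Polynomial.coeff q d) hd0
      simp only [Polynomial.coeff_derivative, Polynomial.coeff_zero] at this
      have hne : ((d:ℝ) + 1) ≠ 0 := by positivity
      have h0 : (p l).coeff (d+1) = 0 := by
        rcases mul_eq_zero.mp this with h | h
        · exact h
        · exact absurd h hne
      simp [h0, Polynomial.coeff_C]
  have : β 1 = e := by
    funext l
    rw [pcβ 1 l, hpC l]
    simp
  rw [hβ] at this
  simpa using this

omit H1 H2 H3 H4


include H1 H2 H3 H4

theorem step (H5 : ∀ (t s : ℝ) (x : Fin n → ℝ), ν (t • x) (s • x) = (t + s) • x)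
    (Q : Fin n → MvPolynomial (Fin n ⊕ Fin n) ℝ)
    (H6 : ∀ x y l, ν x y l = MvPolynomial.eval (Sum.elim x y) (Q l))
    (lam : (Fin n → ℝ) → (Fin n → ℝ) → (Fin n → ℝ))
    (H7 : ∀ x y, ∃ (N : ℕ) (c : ℕ → Fin n → ℝ), ∀ t : ℝ,
      ν (t • x) (t • y) = t • x + t • y + (t^2/2) • lam x y
        + ∑ i ∈ Finset.range N, t^(i+3) • c i)
    (e : Fin n → ℝ) (H8a : ∀ x, lam x e = 0) (H8c : ∀ x, lam (x + e) (-x) = 0) :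
    ∀ (x : Fin n → ℝ) (s : ℝ), ν x (s • e) = x + s • e ∧ ν (s • e) x = x + s • e := by
  have comm_e : ∀ (x : Fin n → ℝ) (s : ℝ), ν x (s • e) = ν (s • e) x := by
    intro x s
    have h1 : conj ν x (s • e) = s • e := by
      rw [conj_line ν H1 H2 H3 H4 H5 Q H6 e x s,
        Wconst ν H1 H2 H3 H4 H5 Q H6 lam H7 e H8a H8c x]
    have h2 := congrArg (fun w => ν w x) h1
    rwa [show (conj ν x (s • e)) = ν (ν x (s • e)) (-x) from rfl,
      cancel₂ ν H1 H2 H3 H4] at h2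
  have key : ∀ (x : Fin n → ℝ) (s : ℝ), ν x (s • e) = x + s • e := by
    intro x s
    have hA : ∀ a b a' b' : ℝ,
        ν (ν (a • x) (b • e)) (ν (a' • x) (b' • e)) = ν ((a+a') • x) ((b+b') • e) := by
      intro a b a' b'
      rw [H1 (a • x) (b • e) (ν (a' • x) (b' • e)),
        ← H1 (b • e) (a' • x) (b' • e),
        ← comm_e (a' • x) b,
        H1 (a' • x) (b • e) (b' • e), H5 b b' e,
        ← H1 (a • x) (a' • x) ((b + b') • e), H5 a a' x]
    set γ : ℝ → (Fin n → ℝ) := fun r => ν (r • x) ((s * r) • e) with hγdef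
    have pcγ : PC γ
        (fun l => MvPolynomial.aeval
          (Sum.elim (fun l' => Polynomial.C (x l') * Polynomial.X)
            (fun l' => Polynomial.C (s * e l') * Polynomial.X)) (Q l)) :=
      compPC ν Q H6 _ _ _ _ (PC_smul' x) (PC_smul e s)
    have hhom : ∀ a b : ℝ, γ (a + b) = ν (γ a) (γ b) := by
      intro a b
      rw [hγdef]
      show ν ((a+b) • x) ((s * (a+b)) • e) = ν (ν (a • x) ((s*a) • e)) (ν (b • x) ((s*b) • e))
      rw [hA a (s*a) b (s*b), mul_add]
    have hL3 := L3 ν H1 H2 H3 H4 H5 γ _ pcγ hhom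
    have hγ1 : γ 1 = ν x (s • e) := by
      rw [hγdef]
      show ν ((1:ℝ) • x) ((s * 1) • e) = ν x (s • e)
      rw [one_smul, mul_one]
    obtain ⟨N, c, hc⟩ := H7 x (s • e)
    have hexp : ∀ t : ℝ, t • γ 1 = t • x + t • (s • e) + (t^2/2) • lam x (s • e)
        + ∑ i ∈ Finset.range N, t^(i+3) • c i := by
      intro t
      rw [← hL3 t, hγdef]
      show ν (t • x) ((s * t) • e) = _
      rw [show (s * t) • e = t • (s • e) by rw [smul_smul, mul_comm]]
      exact hc t
    have hcoord : ∀ l, γ 1 l = x l + s * e l := by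
      intro l
      have hpoly : (Polynomial.C (γ 1 l) * Polynomial.X : Polynomial ℝ)
          = Polynomial.C (x l + s * e l) * Polynomial.X
            + Polynomial.C (lam x (s • e) l / 2) * Polynomial.X^2
            + ∑ i ∈ Finset.range N, Polynomial.C (c i l) * Polynomial.X^(i+3) := by
        apply Polynomial.funext
        intro t
        have h := congrArg (fun v => v l) (hexp t)
        simp only [Pi.add_apply, Pi.smul_apply, smul_eq_mul, Finset.sum_apply] at h
        simp only [Polynomial.eval_add, Polynomial.eval_mul, Polynomial.eval_C,
          Polynomial.eval_X, Polynomial.eval_pow, Polynomial.eval_finset_sum]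
        rw [mul_comm (γ 1 l) t, h]
        rw [show (∑ i ∈ Finset.range N, c i l * t ^ (i+3))
            = ∑ i ∈ Finset.range N, t ^ (i+3) * c i l from
          Finset.sum_congr rfl fun i _ => mul_comm _ _]
        ring
      have hco := congrArg (fun q => Polynomial.coeff q 1) hpoly
      simp only [Polynomial.coeff_add, Polynomial.coeff_C_mul, Polynomial.coeff_X,
        Polynomial.coeff_X_pow] at hco
      rw [Polynomial.finset_sum_coeff] at hco
      simp only [Polynomial.coeff_C_mul, Polynomial.coeff_X_pow] at hco
      simpa using hco
    rw [← hγ1]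
    funext l
    rw [hcoord l]
    simp [Pi.smul_apply]
  intro x s
  refine ⟨key x s, ?_⟩
  rw [← comm_e x s]
  exact key x s

omit H1 H2 H3 H4

end Step

section Transport

variable {g : Type*} [LieRing g] [LieAlgebra ℝ g]

/-- membership in the flag in terms of coordinates -/
lemma memF (m : ℕ) (b : Module.Basis (Fin m) ℝ g) (F : ℕ → Submodule ℝ g)
    (hF : ∀ j, F j = Submodule.span ℝ (⇑b '' {i : Fin m | (i : ℕ) < j}))
    (i : ℕ) (v : g) :
    v ∈ F i ↔ ∀ l : Fin m, i ≤ (l : ℕ) → b.repr v l = 0 := by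
  constructor
  · intro hv l hl
    have hspan : F i ≤ LinearMap.ker (b.coord l) := by
      rw [hF i, Submodule.span_le]
      rintro w ⟨c, hc, rfl⟩
      simp only [SetLike.mem_coe, LinearMap.mem_ker, Module.Basis.coord_apply, Module.Basis.repr_self]
      apply Finsupp.single_eq_of_ne
      intro hcl
      rw [← hcl] at hc
      simp only [Set.mem_setOf_eq] at hc
      omega
    have := hspan hv
    simpa using this
  · intro hv
    have hvs : v = ∑ l : Fin m, b.repr v l • b l := (b.sum_repr v).symm
    rw [hvs]
    apply Submodule.sum_mem
    intro l _
    by_cases hl : i ≤ (l : ℕ)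
    · rw [hv l hl, zero_smul]
      exact Submodule.zero_mem _
    · apply Submodule.smul_mem
      rw [hF i]
      apply Submodule.subset_span
      exact ⟨l, by simpa using Nat.lt_of_not_le hl, rfl⟩

/-- transported global polynomiality -/
lemma reprPoly (mul : g → g → g) (m : ℕ) (b : Module.Basis (Fin m) ℝ g)
    (hp : ∃ (d : ℕ) (b' : Module.Basis (Fin d) ℝ g) (Q : Fin d → MvPolynomial (Fin d ⊕ Fin d) ℝ),
      ∀ (X Y : g) (i : Fin d),
        b'.repr (mul X Y) i =
          MvPolynomial.eval (Sum.elim (fun j => b'.repr X j) (fun j => b'.repr Y j)) (Q i)) :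
    ∃ Qh : Fin m → MvPolynomial (Fin m ⊕ Fin m) ℝ,
      ∀ (X Y : g) (j : Fin m),
        b.repr (mul X Y) j =
          MvPolynomial.eval (Sum.elim (fun l => b.repr X l) (fun l => b.repr Y l)) (Qh j) := by
  obtain ⟨d, b', Q, hQ⟩ := hp
  have step1 : ∀ (Z : g) (j : Fin m),
      b.repr Z j = ∑ i : Fin d, b'.repr Z i * b.repr (b' i) j := by
    intro Z j
    conv_lhs => rw [← b'.sum_repr Z]
    rw [map_sum]
    simp [Finsupp.finset_sum_apply]
  have step2 : ∀ (X : g) (i' : Fin d),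
      b'.repr X i' = ∑ l : Fin m, b.repr X l * b'.repr (b l) i' := by
    intro X i'
    conv_lhs => rw [← b.sum_repr X]
    rw [map_sum]
    simp [Finsupp.finset_sum_apply]
  classical
  refine ⟨fun j => ∑ i : Fin d, MvPolynomial.C (b.repr (b' i) j) *
      MvPolynomial.aeval (Sum.elim
        (fun i' => ∑ l : Fin m, MvPolynomial.C (b'.repr (b l) i') * MvPolynomial.X (Sum.inl l))
        (fun i' => ∑ l : Fin m, MvPolynomial.C (b'.repr (b l) i') * MvPolynomial.X (Sum.inr l)))
        (Q i), ?_⟩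
  intro X Y j
  rw [step1 (mul X Y) j, map_sum]
  apply Finset.sum_congr rfl
  intro i _
  rw [MvPolynomial.eval_mul, MvPolynomial.eval_C, eval_aeval_mv, hQ X Y i]
  have harg : (Sum.elim (fun j_1 => (b'.repr X) j_1) (fun j_1 => (b'.repr Y) j_1) : Fin d ⊕ Fin d → ℝ)
      = fun a => MvPolynomial.eval (Sum.elim (fun l => b.repr X l) (fun l => b.repr Y l))
          ((Sum.elim
            (fun i' => ∑ l : Fin m, MvPolynomial.C (b'.repr (b l) i') * MvPolynomial.X (Sum.inl l))
            (fun i' => ∑ l : Fin m, MvPolynomial.C (b'.repr (b l) i') * MvPolynomial.X (Sum.inr l))) a) := by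
    funext a
    cases a with
    | inl i' =>
      simp only [Sum.elim_inl, map_sum, MvPolynomial.eval_mul, MvPolynomial.eval_C,
        MvPolynomial.eval_X]
      rw [step2 X i']
      apply Finset.sum_congr rfl
      intro l _
      simp [mul_comm]
    | inr i' =>
      simp only [Sum.elim_inr, map_sum, MvPolynomial.eval_mul, MvPolynomial.eval_C,
        MvPolynomial.eval_X]
      rw [step2 Y i']
      apply Finset.sum_congr rfl
      intro l _
      simp [mul_comm]
  rw [harg]
  ring

end Transport

section Main

variable {g : Type*} [LieRing g] [LieAlgebra ℝ g]

theorem Tmain (mul : g → g → g)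
    (h1 : ∀ X Y Z, mul (mul X Y) Z = mul X (mul Y Z))
    (h2 : ∀ X, mul 0 X = X) (h3 : ∀ X, mul X 0 = X) (h4 : ∀ X, mul X (-X) = 0)
    (h5 : ∀ (t s : ℝ) (X : g), mul (t • X) (s • X) = (t + s) • X)
    (m : ℕ) (b : Module.Basis (Fin m) ℝ g)
    (Qh : Fin m → MvPolynomial (Fin m ⊕ Fin m) ℝ)
    (hQh : ∀ (X Y : g) (j : Fin m),
      b.repr (mul X Y) j =
        MvPolynomial.eval (Sum.elim (fun l => b.repr X l) (fun l => b.repr Y l)) (Qh j))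
    (h7 : ∀ X Y : g, ∃ (N : ℕ) (c : ℕ → g), ∀ t : ℝ,
      mul (t • X) (t • Y) =
        t • X + t • Y + (t ^ 2 / 2) • ⁅X, Y⁆ + ∑ i ∈ Finset.range N, t ^ (i + 3) • c i)
    (F : ℕ → Submodule ℝ g)
    (hF : ∀ j, F j = Submodule.span ℝ (⇑b '' {i : Fin m | (i : ℕ) < j}))
    (hJH : ∀ (j : ℕ) (Z : g), ∀ v ∈ F (j + 1), ⁅Z, v⁆ ∈ F j) :
    ∀ (i : ℕ) (X Y u v : g), u ∈ F (i+1) → v ∈ F (i+1) →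
      mul (X + u) (Y + v) - (mul X Y + u + v) ∈ F i := by
  intro i
  induction i using Nat.strong_induction_on with
  | _ i IH =>
  by_cases him : m ≤ i
  · -- trivial case : F i = everything
    intro X Y u v _ _
    rw [memF m b F hF]
    intro l hl
    have := l.isLt
    omega
  · -- main case : i < m
    have hi : i < m := Nat.lt_of_not_le him
    intro X Y u v hu hv
    -- the quotient coordinates
    set emb : Fin (m-i) → Fin m := fun l => ⟨i + (l:ℕ), by omega⟩ with hembdef
    set proj : g → (Fin (m-i) → ℝ) := fun w l => b.repr w (emb l) with hprojdef
    set iota : (Fin (m-i) → ℝ) → g := fun x => ∑ l : Fin (m-i), x l • b (emb l) with hiotadef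
    set bi : Fin m := ⟨i, hi⟩ with hbidef
    set e : Fin (m-i) → ℝ := proj (b bi) with hedef
    have hembinj : Function.Injective emb := by
      intro a b hab
      rw [hembdef] at hab
      simp only [Fin.mk.injEq] at hab
      exact Fin.ext (by omega)
    -- linearity of proj
    have hprojadd : ∀ w w' : g, proj (w + w') = proj w + proj w' := by
      intro w w'; funext l; simp [hprojdef]
    have hprojsub : ∀ w w' : g, proj (w - w') = proj w - proj w' := by
      intro w w'; funext l; simp [hprojdef]
    have hprojsmul : ∀ (t : ℝ) (w : g), proj (t • w) = t • proj w := by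
      intro t w; funext l; simp [hprojdef]
    have hprojzero : proj 0 = 0 := by funext l; simp [hprojdef]
    have hprojsum : ∀ (N : ℕ) (w : ℕ → g),
        proj (∑ j ∈ Finset.range N, w j) = ∑ j ∈ Finset.range N, proj (w j) := by
      intro N w; funext l
      simp [hprojdef, Finsupp.finset_sum_apply]
    -- linearity of iota
    have hiotaadd : ∀ x y, iota (x + y) = iota x + iota y := by
      intro x y
      rw [hiotadef]
      simp only [Pi.add_apply, add_smul]
      rw [Finset.sum_add_distrib]
    have hiotasmul : ∀ (t : ℝ) x, iota (t • x) = t • iota x := by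
      intro t x
      rw [hiotadef]
      simp only [Pi.smul_apply, smul_eq_mul, ← smul_smul]
      rw [Finset.smul_sum]
    have hiotazero : iota 0 = 0 := by rw [hiotadef]; simp
    have hiotaneg : ∀ x, iota (-x) = -iota x := by
      intro x
      have := hiotasmul (-1) x
      simpa using this
    -- coordinates of iota
    have hembsur : ∀ l' : Fin m, i ≤ (l' : ℕ) →
        emb ⟨(l' : ℕ) - i, by omega⟩ = l' := by
      intro l' h
      rw [hembdef]
      exact Fin.ext (by simp; omega)
    have hreprterm : ∀ (x : Fin (m-i) → ℝ) (l : Fin (m-i)) (l' : Fin m),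
        (b.repr (x l • b (emb l))) l' = x l * (if emb l = l' then 1 else 0) := by
      intro x l l'
      rw [map_smul]
      simp [Module.Basis.repr_self, Finsupp.single_apply]
    have hrepriota_pos : ∀ (x : Fin (m-i) → ℝ) (l0 : Fin (m-i)),
        b.repr (iota x) (emb l0) = x l0 := by
      intro x l0
      rw [hiotadef]
      rw [map_sum, Finsupp.finset_sum_apply]
      rw [Finset.sum_congr rfl fun l _ => hreprterm x l (emb l0)]
      rw [Finset.sum_eq_single l0]
      · rw [if_pos rfl, mul_one]
      · intro l _ hne
        rw [if_neg (fun hc => hne (hembinj hc)), mul_zero]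
      · intro hc
        exact absurd (Finset.mem_univ _) hc
    have hrepriota_neg : ∀ (x : Fin (m-i) → ℝ) (l' : Fin m), (l' : ℕ) < i →
        b.repr (iota x) l' = 0 := by
      intro x l' hl'
      rw [hiotadef]
      rw [map_sum, Finsupp.finset_sum_apply]
      rw [Finset.sum_congr rfl fun l _ => hreprterm x l l']
      apply Finset.sum_eq_zero
      intro l _
      rw [if_neg, mul_zero]
      intro hc
      have := congrArg Fin.val hc
      rw [hembdef] at this
      simp at this
      omega
    have hprojiota : ∀ x, proj (iota x) = x := by
      intro x
      funext l
      rw [hprojdef]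
      simp only
      rw [hrepriota_pos]
    -- membership mod F i
    have hmemproj : ∀ w : g, w ∈ F i ↔ proj w = 0 := by
      intro w
      rw [memF m b F hF]
      constructor
      · intro h
        funext l
        rw [hprojdef]
        exact h (emb l) (by rw [hembdef]; simp)
      · intro h l hl
        have h3 := congrArg (fun q => q (⟨(l : ℕ) - i, by omega⟩ : Fin (m-i))) h
        rw [hprojdef] at h3
        simp only [Pi.zero_apply] at h3
        rwa [hembsur l hl] at h3
    have hcomp : ∀ w : g, w - iota (proj w) ∈ F i := by
      intro w
      rw [memF m b F hF]
      intro l hl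
      rw [map_sub, Finsupp.sub_apply]
      rw [← hembsur l hl, hrepriota_pos]
      rw [hprojdef]
      simp only
      rw [sub_self]
    have hFmono : ∀ j : ℕ, F j ≤ F (j+1) := by
      intro j
      rw [hF j, hF (j+1)]
      apply Submodule.span_mono
      apply Set.image_mono
      intro w hw
      simp only [Set.mem_setOf_eq] at hw ⊢
      omega
    have hzeroF : i = 0 → ∀ w : g, w ∈ F 0 → w = 0 := by
      intro hi0 w hw
      rw [memF m b F hF] at hw
      rw [← b.sum_repr w]
      apply Finset.sum_eq_zero
      intro l _
      rw [hw l (by omega), zero_smul]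
    -- the K lemma from the induction hypothesis
    have hK : ∀ (X' Y' u' v' : g), u' ∈ F i → v' ∈ F i →
        mul (X' + u') (Y' + v') - (mul X' Y' + u' + v') ∈ F i := by
      intro X' Y' u' v' hu' hv'
      rcases Nat.eq_zero_or_pos i with hi0 | hipos
      · subst hi0
        rw [hzeroF rfl u' hu', hzeroF rfl v' hv']
        simp
      · have h := IH (i-1) (by omega) X' Y' u' v'
          (by rw [show i - 1 + 1 = i by omega]; exact hu')
          (by rw [show i - 1 + 1 = i by omega]; exact hv')
        have h2 : F (i-1) ≤ F i := by
          have := hFmono (i-1)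
          rwa [show i - 1 + 1 = i by omega] at this
        exact h2 h
    have hKp : ∀ (X' Y' u' v' : g), u' ∈ F i → v' ∈ F i →
        proj (mul (X' + u') (Y' + v')) = proj (mul X' Y') := by
      intro X' Y' u' v' hu' hv'
      have h := hK X' Y' u' v' hu' hv'
      have h2 : mul (X' + u') (Y' + v')
          = mul X' Y' + u' + v' + (mul (X' + u') (Y' + v') - (mul X' Y' + u' + v')) := by
        abel
      rw [h2, hprojadd, hprojadd, hprojadd, (hmemproj _).mp h, (hmemproj _).mp hu',
        (hmemproj _).mp hv']
      abel
    -- the quotient group law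
    set ν : (Fin (m-i) → ℝ) → (Fin (m-i) → ℝ) → (Fin (m-i) → ℝ) :=
      fun x y => proj (mul (iota x) (iota y)) with hνdef
    have SH1 : ∀ x y z, ν (ν x y) z = ν x (ν y z) := by
      intro x y z
      have key : ∀ w : g, ∀ x' : Fin (m-i) → ℝ,
          proj (mul (iota (proj w)) (iota x')) = proj (mul w (iota x')) ∧
          proj (mul (iota x') (iota (proj w))) = proj (mul (iota x') w) := by
        intro w x'
        have hmem : iota (proj w) - w ∈ F i := by
          have := hcomp w
          have h2 := Submodule.neg_mem _ this
          rwa [neg_sub] at h2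
        constructor
        · have := hKp w (iota x') (iota (proj w) - w) 0 hmem (Submodule.zero_mem _)
          rwa [add_zero, show w + (iota (proj w) - w) = iota (proj w) by abel] at this
        · have := hKp (iota x') w 0 (iota (proj w) - w) (Submodule.zero_mem _) hmem
          rwa [add_zero, show w + (iota (proj w) - w) = iota (proj w) by abel] at this
      rw [hνdef]
      simp only
      rw [(key (mul (iota x) (iota y)) z).1, (key (mul (iota y) (iota z)) x).2, h1]
    have SH2 : ∀ x, ν 0 x = x := by
      intro x
      rw [hνdef]
      simp only
      rw [hiotazero, h2, hprojiota]
    have SH3 : ∀ x, ν x 0 = x := by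
      intro x
      rw [hνdef]
      simp only
      rw [hiotazero, h3, hprojiota]
    have SH4 : ∀ x, ν x (-x) = 0 := by
      intro x
      rw [hνdef]
      simp only
      rw [hiotaneg, h4, hprojzero]
    have SH5 : ∀ (t s : ℝ) x, ν (t • x) (s • x) = (t + s) • x := by
      intro t s x
      rw [hνdef]
      simp only
      rw [hiotasmul, hiotasmul, h5, hprojsmul, hprojiota]
    -- polynomiality of ν
    obtain ⟨Qν, SH6⟩ : ∃ Qν : Fin (m-i) → MvPolynomial (Fin (m-i) ⊕ Fin (m-i)) ℝ,
        ∀ x y l, ν x y l = MvPolynomial.eval (Sum.elim x y) (Qν l) := by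
      classical
      refine ⟨fun l => MvPolynomial.aeval (Sum.elim
        (fun l' : Fin m => if h : i ≤ (l' : ℕ)
          then MvPolynomial.X (Sum.inl (⟨(l' : ℕ) - i, by omega⟩ : Fin (m-i))) else 0)
        (fun l' : Fin m => if h : i ≤ (l' : ℕ)
          then MvPolynomial.X (Sum.inr (⟨(l' : ℕ) - i, by omega⟩ : Fin (m-i))) else 0))
        (Qh (emb l)), ?_⟩
      intro x y l
      rw [hνdef]
      simp only
      rw [hprojdef]
      simp only
      rw [hQh, eval_aeval_mv]
      have harg : (Sum.elim (fun l' => b.repr (iota x) l') (fun l' => b.repr (iota y) l')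
            : Fin m ⊕ Fin m → ℝ)
          = fun a => MvPolynomial.eval (Sum.elim x y) ((Sum.elim
            (fun l' : Fin m => if h : i ≤ (l' : ℕ)
              then MvPolynomial.X (Sum.inl (⟨(l' : ℕ) - i, by omega⟩ : Fin (m-i))) else 0)
            (fun l' : Fin m => if h : i ≤ (l' : ℕ)
              then MvPolynomial.X (Sum.inr (⟨(l' : ℕ) - i, by omega⟩ : Fin (m-i))) else 0)) a) := by
        funext a
        cases a with
        | inl l' =>
          simp only [Sum.elim_inl]
          by_cases h : i ≤ (l' : ℕ)
          · rw [dif_pos h, MvPolynomial.eval_X, Sum.elim_inl]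
            conv_lhs => rw [← hembsur l' h]
            exact hrepriota_pos x _
          · rw [dif_neg h, hrepriota_neg x l' (by omega), map_zero]
        | inr l' =>
          simp only [Sum.elim_inr]
          by_cases h : i ≤ (l' : ℕ)
          · rw [dif_pos h, MvPolynomial.eval_X, Sum.elim_inr]
            conv_lhs => rw [← hembsur l' h]
            exact hrepriota_pos y _
          · rw [dif_neg h, hrepriota_neg y l' (by omega), map_zero]
      rw [harg]
    -- the quotient bracket
    set lamν : (Fin (m-i) → ℝ) → (Fin (m-i) → ℝ) → (Fin (m-i) → ℝ) :=
      fun x y => proj ⁅iota x, iota y⁆ with hlamdef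
    have SH7 : ∀ x y, ∃ (N : ℕ) (c : ℕ → Fin (m-i) → ℝ), ∀ t : ℝ,
        ν (t • x) (t • y) = t • x + t • y + (t^2/2) • lamν x y
          + ∑ j ∈ Finset.range N, t^(j+3) • c j := by
      intro x y
      obtain ⟨N, c, hc⟩ := h7 (iota x) (iota y)
      refine ⟨N, fun j => proj (c j), ?_⟩
      intro t
      rw [hνdef]
      simp only
      rw [hiotasmul, hiotasmul, hc t, hprojadd, hprojadd, hprojadd, hprojsmul, hprojsmul,
        hprojsmul, hprojiota, hprojiota, hprojsum]
      congr 1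
      apply Finset.sum_congr rfl
      intro j _
      rw [hprojsmul]
    have hiotae : iota e = b bi := by
      rw [hiotadef]
      simp only
      have hterm : ∀ l : Fin (m-i), e l • b (emb l)
          = (if emb l = bi then (1:ℝ) else 0) • b (emb l) := by
        intro l
        congr 1
        rw [hedef, hprojdef]
        simp only
        rw [Module.Basis.repr_self, Finsupp.single_apply]
        by_cases h : emb l = bi
        · rw [if_pos h.symm, if_pos h]
        · rw [if_neg (fun hc => h hc.symm), if_neg h]
      rw [Finset.sum_congr rfl fun l _ => hterm l]
      have h0 : emb (⟨0, by omega⟩ : Fin (m-i)) = bi := by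
        rw [hembdef]; exact Fin.ext (by simp [hbidef])
      rw [Finset.sum_eq_single (⟨0, by omega⟩ : Fin (m-i))]
      · rw [if_pos h0, one_smul, h0]
      · intro l _ hne
        rw [if_neg, zero_smul]
        intro hc
        exact hne (hembinj (h0 ▸ hc))
      · intro hc
        exact absurd (Finset.mem_univ _) hc
    have hbiF : b bi ∈ F (i+1) := by
      rw [hF (i+1)]
      apply Submodule.subset_span
      exact ⟨bi, by simp [hbidef], rfl⟩
    have SH8a : ∀ x, lamν x e = 0 := by
      intro x
      rw [hlamdef]
      simp only
      rw [hiotae]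
      exact (hmemproj _).mp (hJH i (iota x) (b bi) hbiF)
    have SH8c : ∀ x, lamν (x + e) (-x) = 0 := by
      intro x
      rw [hlamdef]
      simp only
      rw [hiotaadd, hiotae, hiotaneg]
      have hbr : ⁅iota x + b bi, -iota x⁆ = ⁅iota x, b bi⁆ := by
        rw [lie_neg, add_lie, lie_self, zero_add, ← lie_skew, neg_neg]
      rw [hbr]
      exact (hmemproj _).mp (hJH i (iota x) (b bi) hbiF)
    -- apply the step theorem
    have hstep := step ν SH1 SH2 SH3 SH4 SH5 Qν SH6 lamν SH7 e SH8a SH8c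
    have hNU : ∀ (x' y' : Fin (m-i) → ℝ) (aa cc : ℝ),
        ν (x' + aa • e) (y' + cc • e) = ν x' y' + aa • e + cc • e := by
      intro x' y' aa cc
      calc ν (x' + aa • e) (y' + cc • e)
          = ν (ν x' (aa • e)) (ν y' (cc • e)) := by rw [(hstep x' aa).1, (hstep y' cc).1]
        _ = ν x' (ν (aa • e) (ν y' (cc • e))) := SH1 _ _ _
        _ = ν x' ((ν y' (cc • e)) + aa • e) := by rw [(hstep (ν y' (cc • e)) aa).2]
        _ = ν x' (ν (ν y' (cc • e)) (aa • e)) := by rw [(hstep (ν y' (cc • e)) aa).1]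
        _ = ν (ν x' (ν y' (cc • e))) (aa • e) := (SH1 _ _ _).symm
        _ = ν x' (ν y' (cc • e)) + aa • e := (hstep _ aa).1
        _ = ν (ν x' y') (cc • e) + aa • e := by rw [SH1]
        _ = (ν x' y' + cc • e) + aa • e := by rw [(hstep _ cc).1]
        _ = ν x' y' + aa • e + cc • e := by abel
    -- decompose the shifts
    set aa := b.repr u bi with haadef
    set cc := b.repr v bi with hccdef
    set u₀ := u - aa • b bi with hu0def
    set v₀ := v - cc • b bi with hv0def
    have hmemdec : ∀ (w : g) (hw : w ∈ F (i+1)),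
        w - (b.repr w bi) • b bi ∈ F i := by
      intro w hw
      rw [memF m b F hF]
      intro l hl
      rw [map_sub, Finsupp.sub_apply, map_smul, Finsupp.smul_apply, Module.Basis.repr_self,
        Finsupp.single_apply, smul_eq_mul]
      by_cases hlbi : bi = l
      · rw [if_pos hlbi, mul_one, ← hlbi, sub_self]
      · rw [if_neg hlbi, mul_zero, sub_zero]
        apply (memF m b F hF (i+1) w).mp hw l
        have : (bi : ℕ) ≠ (l : ℕ) := fun hc => hlbi (Fin.ext hc)
        rw [hbidef] at this
        simp only at this
        omega
    have hu0 : u₀ ∈ F i := hmemdec u hu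
    have hv0 : v₀ ∈ F i := hmemdec v hv
    -- main step 1 : absorb the F i parts
    have main1 : mul (X + u) (Y + v)
        - (mul (X + aa • b bi) (Y + cc • b bi) + u₀ + v₀) ∈ F i := by
      have h := hK (X + aa • b bi) (Y + cc • b bi) u₀ v₀ hu0 hv0
      rwa [show X + aa • b bi + u₀ = X + u by rw [hu0def]; abel,
        show Y + cc • b bi + v₀ = Y + v by rw [hv0def]; abel] at h
    -- main step 2 : the central shift
    have main2 : mul (X + aa • b bi) (Y + cc • b bi)
        - (mul X Y + aa • b bi + cc • b bi) ∈ F i := by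
      rw [hmemproj]
      have hX0 : X - iota (proj X) ∈ F i := hcomp X
      have hY0 : Y - iota (proj Y) ∈ F i := hcomp Y
      have hXdec : X + aa • b bi = iota (proj X + aa • e) + (X - iota (proj X)) := by
        rw [hiotaadd, hiotasmul, hiotae]
        abel
      have hYdec : Y + cc • b bi = iota (proj Y + cc • e) + (Y - iota (proj Y)) := by
        rw [hiotaadd, hiotasmul, hiotae]
        abel
      have hXdec' : X = iota (proj X) + (X - iota (proj X)) := by abel
      have hYdec' : Y = iota (proj Y) + (Y - iota (proj Y)) := by abel
      have hL : proj (mul (X + aa • b bi) (Y + cc • b bi))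
          = ν (proj X + aa • e) (proj Y + cc • e) := by
        rw [hXdec, hYdec, hKp _ _ _ _ hX0 hY0, hνdef]
      have hR : proj (mul X Y) = ν (proj X) (proj Y) := by
        conv_lhs => rw [hXdec', hYdec']
        rw [hKp _ _ _ _ hX0 hY0, hνdef]
      rw [hprojsub, hprojadd, hprojadd, hL, hR, hNU, hprojsmul, hprojsmul, ← hedef]
      abel
    -- combine
    have hfinal : mul (X + u) (Y + v) - (mul X Y + u + v)
        = (mul (X + u) (Y + v) - (mul (X + aa • b bi) (Y + cc • b bi) + u₀ + v₀))
          + (mul (X + aa • b bi) (Y + cc • b bi) - (mul X Y + aa • b bi + cc • b bi)) := by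
      rw [hu0def, hv0def]
      abel
    rw [hfinal]
    exact Submodule.add_mem _ main1 main2

end Main

/-- recursive inverse polynomials -/
noncomputable def qAux (m : ℕ) (P : Fin m → MvPolynomial (Fin m) ℝ) : Fin m → MvPolynomial (Fin m) ℝ :=
  fun j => MvPolynomial.X j - MvPolynomial.bind₁
    (fun i : Fin m => if h : (j : ℕ) < (i : ℕ) then qAux m P i else 0) (P j)
termination_by j => m - (j : ℕ)
decreasing_by
  have := i.isLt
  omega

section Fold

variable {g : Type*} [LieRing g] [LieAlgebra ℝ g]

lemma FmonoG (m : ℕ) (b : Module.Basis (Fin m) ℝ g) (F : ℕ → Submodule ℝ g)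
    (hF : ∀ j, F j = Submodule.span ℝ (⇑b '' {i : Fin m | (i : ℕ) < j})) (j : ℕ) :
    F j ≤ F (j+1) := by
  rw [hF j, hF (j+1)]
  apply Submodule.span_mono
  apply Set.image_mono
  intro w hw
  simp only [Set.mem_setOf_eq] at hw ⊢
  omega

lemma bmemF (m : ℕ) (b : Module.Basis (Fin m) ℝ g) (F : ℕ → Submodule ℝ g)
    (hF : ∀ j, F j = Submodule.span ℝ (⇑b '' {i : Fin m | (i : ℕ) < j}))
    (i0 : Fin m) (jn : ℕ) (h : (i0 : ℕ) ≤ jn) : b i0 ∈ F (jn + 1) := by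
  rw [hF (jn+1)]
  apply Submodule.subset_span
  exact ⟨i0, by simp; omega, rfl⟩

lemma foldPoly (mul : g → g → g) (m : ℕ) (b : Module.Basis (Fin m) ℝ g)
    (Qh : Fin m → MvPolynomial (Fin m ⊕ Fin m) ℝ)
    (hQh : ∀ (X Y : g) (j : Fin m),
      b.repr (mul X Y) j =
        MvPolynomial.eval (Sum.elim (fun l => b.repr X l) (fun l => b.repr Y l)) (Qh j))
    (L : List (Finset (Fin m))) :
    ∃ S : Fin m → MvPolynomial (Fin m) ℝ, ∀ (t : Fin m → ℝ) (j : Fin m),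
      b.repr ((L.map (fun a => ∑ jj ∈ a, t jj • b jj)).foldr mul 0) j
        = MvPolynomial.eval t (S j) := by
  classical
  induction L with
  | nil =>
    refine ⟨fun _ => 0, ?_⟩
    intro t j
    simp
  | cons a L ihL =>
    obtain ⟨S, hS⟩ := ihL
    refine ⟨fun j => MvPolynomial.aeval
      (Sum.elim (fun l => if l ∈ a then MvPolynomial.X l else 0) S) (Qh j), ?_⟩
    intro t j
    have hfold : ((a :: L).map (fun a' => ∑ jj ∈ a', t jj • b jj)).foldr mul 0
        = mul (∑ jj ∈ a, t jj • b jj) ((L.map (fun a' => ∑ jj ∈ a', t jj • b jj)).foldr mul 0) := by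
      simp
    rw [hfold, hQh, eval_aeval_mv]
    have hVa : ∀ l : Fin m, b.repr (∑ jj ∈ a, t jj • b jj) l
        = if l ∈ a then t l else 0 := by
      intro l
      rw [map_sum, Finsupp.finset_sum_apply]
      have hterm : ∀ jj : Fin m, (b.repr (t jj • b jj)) l
          = if jj = l then t jj else 0 := by
        intro jj
        rw [map_smul]
        simp [Module.Basis.repr_self, Finsupp.single_apply]
      rw [Finset.sum_congr rfl fun jj _ => hterm jj]
      rw [Finset.sum_ite_eq' a l (fun jj => t jj)]
    have harg : (Sum.elim (fun l => b.repr (∑ jj ∈ a, t jj • b jj) l)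
          (fun l => b.repr ((L.map (fun a' => ∑ jj ∈ a', t jj • b jj)).foldr mul 0) l)
          : Fin m ⊕ Fin m → ℝ)
        = fun x => MvPolynomial.eval t
            ((Sum.elim (fun l => if l ∈ a then MvPolynomial.X l else 0) S) x) := by
      funext x
      cases x with
      | inl l =>
        simp only [Sum.elim_inl]
        rw [hVa l]
        by_cases h : l ∈ a
        · rw [if_pos h, if_pos h, MvPolynomial.eval_X]
        · rw [if_neg h, if_neg h, map_zero]
      | inr l =>
        simp only [Sum.elim_inr]
        rw [hS t l]
    rw [harg]

lemma foldTriang (mul : g → g → g) (m : ℕ) (b : Module.Basis (Fin m) ℝ g)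
    (F : ℕ → Submodule ℝ g)
    (hF : ∀ j, F j = Submodule.span ℝ (⇑b '' {i : Fin m | (i : ℕ) < j}))
    (T : ∀ (i : ℕ) (X Y u v : g), u ∈ F (i+1) → v ∈ F (i+1) →
      mul (X + u) (Y + v) - (mul X Y + u + v) ∈ F i) :
    ∀ (L : List (Finset (Fin m))) (jn : ℕ) (t s : Fin m → ℝ),
      (∀ i : Fin m, jn < (i : ℕ) → t i = s i) →
      (L.map (fun a => ∑ jj ∈ a, t jj • b jj)).foldr mul 0
        - ((L.map (fun a => ∑ jj ∈ a, s jj • b jj)).foldr mul 0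
          + (L.map (fun a => ∑ i0 ∈ a.filter (fun i0 : Fin m => (i0 : ℕ) ≤ jn), (t i0 - s i0) • b i0)).sum)
        ∈ F jn := by
  classical
  intro L jn t s hts
  have hcorr_mem : ∀ (a' : Finset (Fin m)),
      (∑ i0 ∈ a'.filter (fun i0 : Fin m => (i0 : ℕ) ≤ jn), (t i0 - s i0) • b i0) ∈ F (jn+1) := by
    intro a'
    apply Submodule.sum_mem
    intro i0 hi0
    apply Submodule.smul_mem
    apply bmemF m b F hF
    exact (Finset.mem_filter.mp hi0).2
  have hsum_mem : ∀ (L' : List (Finset (Fin m))),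
      ((L'.map (fun a' => ∑ i0 ∈ a'.filter (fun i0 : Fin m => (i0 : ℕ) ≤ jn),
        (t i0 - s i0) • b i0)).sum : g) ∈ F (jn+1) := by
    intro L'
    induction L' with
    | nil => simpa using Submodule.zero_mem _
    | cons a' L'' ihL'' =>
      simp only [List.map_cons, List.sum_cons]
      exact Submodule.add_mem _ (hcorr_mem a') ihL''
  induction L with
  | nil =>
    simp only [List.map_nil, List.foldr_nil, List.sum_nil, add_zero, sub_zero, sub_self]
    exact Submodule.zero_mem _
  | cons a L ihL =>
    simp only [List.map_cons, List.foldr_cons, List.sum_cons]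
    set Wt : g := (L.map (fun a' => ∑ jj ∈ a', t jj • b jj)).foldr mul 0 with hWtdef
    set Ws : g := (L.map (fun a' => ∑ jj ∈ a', s jj • b jj)).foldr mul 0 with hWsdef
    set Vt : g := ∑ jj ∈ a, t jj • b jj with hVtdef
    set Vs : g := ∑ jj ∈ a, s jj • b jj with hVsdef
    set u : g := ∑ i0 ∈ a.filter (fun i0 : Fin m => (i0 : ℕ) ≤ jn), (t i0 - s i0) • b i0 with hudef
    set DL : g := (L.map (fun a' => ∑ i0 ∈ a'.filter (fun i0 : Fin m => (i0 : ℕ) ≤ jn), (t i0 - s i0) • b i0)).sum with hDLdef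
    have hu : u ∈ F (jn+1) := hcorr_mem a
    have hDL : DL ∈ F (jn+1) := by
      rw [hDLdef]
      exact hsum_mem L
    have hVts : Vt = Vs + u := by
      rw [hVtdef, hVsdef, hudef]
      have h1 : (∑ jj ∈ a, t jj • b jj) - (∑ jj ∈ a, s jj • b jj)
          = ∑ jj ∈ a, (t jj - s jj) • b jj := by
        rw [← Finset.sum_sub_distrib]
        apply Finset.sum_congr rfl
        intro jj _
        rw [sub_smul]
      have h2 : (∑ jj ∈ a, (t jj - s jj) • b jj)
          = ∑ i0 ∈ a.filter (fun i0 : Fin m => (i0 : ℕ) ≤ jn), (t i0 - s i0) • b i0 := by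
        symm
        apply Finset.sum_subset (Finset.filter_subset _ _)
        intro i0 hi0 hni0
        have hlt : jn < (i0 : ℕ) := by
          by_contra hc
          exact hni0 (Finset.mem_filter.mpr ⟨hi0, by omega⟩)
        rw [hts i0 hlt, sub_self, zero_smul]
      rw [← h2, ← h1]
      abel
    set r : g := Wt - (Ws + DL) with hrdef
    have hr : r ∈ F jn := ihL
    have hWts : Wt = Ws + (DL + r) := by rw [hrdef]; abel
    have hshift : DL + r ∈ F (jn+1) :=
      Submodule.add_mem _ hDL (FmonoG m b F hF jn hr)
    have hT := T jn Vs Ws u (DL + r) hu hshift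
    have hgoal : mul Vt Wt - (mul Vs Ws + (u + DL))
        = (mul (Vs + u) (Ws + (DL + r)) - (mul Vs Ws + u + (DL + r))) + r := by
      rw [hVts, hWts]
      abel
    rw [hgoal]
    exact Submodule.add_mem _ hT hr

end Fold

end BCHaux

/-- Let `g` be a nilpotent Lie algebra with Jordan–Hölder basis
`b` (flag `Fⱼ = span{b₀,…,b_{j-1}}`, `[g, Fⱼ₊₁] ⊆ Fⱼ`), and let
`{0,…,m-1} = A₀ ⊔ ⋯ ⊔ A_{k-1}` be a partition. Define
`Φ(t) = (Σ_{j∈A₀} tⱼbⱼ) · ⋯ · (Σ_{j∈A_{k-1}} tⱼbⱼ)` via the BCH product.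
Then there are polynomials `Pⱼ` depending only on the variables after `j` with
`Φ(t) = Σⱼ (tⱼ + Pⱼ(t)) bⱼ`; in particular `Φ` is a bijection with polynomial
inverse. -/
theorem stmt_16 {g : Type*} [LieRing g] [LieAlgebra ℝ g] [FiniteDimensional ℝ g]
    (hnilp : ∃ k, LieModule.lowerCentralSeries ℝ g g k = ⊥)
    (mul : g → g → g) (hmul : IsBCHMul g mul)
    (m : ℕ) (b : Module.Basis (Fin m) ℝ g)
    (F : ℕ → Submodule ℝ g)
    (hF : ∀ j, F j = Submodule.span ℝ (⇑b '' {i : Fin m | (i : ℕ) < j}))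
    (hJH : ∀ (j : ℕ) (Z : g), ∀ v ∈ F (j + 1), ⁅Z, v⁆ ∈ F j)
    (k : ℕ) (A : Fin k → Finset (Fin m))
    (hdisj : ∀ r r' : Fin k, r ≠ r' → Disjoint (A r) (A r'))
    (hcover : ∀ i : Fin m, ∃ r, i ∈ A r)
    (Φ : (Fin m → ℝ) → g)
    (hΦ : ∀ t, Φ t = (List.ofFn fun r : Fin k => ∑ j ∈ A r, t j • b j).foldr mul 0) :
    (∃ P : Fin m → MvPolynomial (Fin m) ℝ,
      (∀ (j : Fin m), ∀ i ∈ (P j).vars, (j : ℕ) < (i : ℕ)) ∧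
      ∀ t : Fin m → ℝ, Φ t = ∑ j, (t j + MvPolynomial.eval t (P j)) • b j) ∧
    Function.Bijective Φ ∧
    ∃ q : Fin m → MvPolynomial (Fin m) ℝ,
      ∀ (Y : g) (j : Fin m),
        Function.invFun Φ Y j = MvPolynomial.eval (fun i => b.repr Y i) (q j) := by
  classical
  obtain ⟨h1, h2, h3, h4, h5, h6, h7⟩ := hmul
  obtain ⟨Qh, hQh⟩ := BCHaux.reprPoly mul m b h6
  have T := BCHaux.Tmain mul h1 h2 h3 h4 h5 m b Qh hQh h7 F hF hJH
  have hΦL : ∀ t, Φ t = ((List.ofFn A).map (fun a => ∑ jj ∈ a, t jj • b jj)).foldr mul 0 := by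
    intro t
    rw [hΦ, List.map_ofFn]
    rfl
  obtain ⟨S, hS⟩ := BCHaux.foldPoly mul m b Qh hQh (List.ofFn A)
  set P : Fin m → MvPolynomial (Fin m) ℝ := fun j => MvPolynomial.aeval
    (fun i : Fin m => if (j : ℕ) < (i : ℕ) then MvPolynomial.X i else 0) (S j) with hPdef
  have hPvars : ∀ j : Fin m, ∀ i ∈ (P j).vars, (j : ℕ) < (i : ℕ) := by
    intro j i hi
    have hsup : P j ∈ MvPolynomial.supported ℝ {i' : Fin m | (j : ℕ) < (i' : ℕ)} := by
      rw [hPdef]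
      apply BCHaux.aeval_mem_supported
      intro i'
      by_cases h : (j : ℕ) < (i' : ℕ)
      · rw [if_pos h]
        rw [MvPolynomial.mem_supported, MvPolynomial.vars_X]
        intro w hw
        simp only [Finset.coe_singleton, Set.mem_singleton_iff] at hw
        subst hw
        exact h
      · rw [if_neg h]
        exact Subalgebra.zero_mem _
    exact (MvPolynomial.mem_supported.mp hsup) hi
  -- the coordinate identity
  have hrepr : ∀ (t : Fin m → ℝ) (j : Fin m),
      b.repr (Φ t) j = t j + MvPolynomial.eval t (P j) := by
    intro t j
    set s : Fin m → ℝ := fun i => if (j : ℕ) < (i : ℕ) then t i else 0 with hsdef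
    have hts : ∀ i : Fin m, (j : ℕ) < (i : ℕ) → t i = s i := by
      intro i hi
      rw [hsdef]
      simp only
      rw [if_pos hi]
    have htri := BCHaux.foldTriang mul m b F hF T (List.ofFn A) (j : ℕ) t s hts
    have hcoord := (BCHaux.memF m b F hF (j : ℕ) _).mp htri j (le_refl _)
    rw [map_sub, map_add, Finsupp.sub_apply, Finsupp.add_apply] at hcoord
    -- compute the coordinate of the correction term
    have hD : (b.repr (((List.ofFn A).map
        (fun a => ∑ i0 ∈ a.filter (fun i0 : Fin m => (i0 : ℕ) ≤ (j : ℕ)),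
          (t i0 - s i0) • b i0)).sum)) j = t j := by
      rw [List.map_ofFn]
      rw [List.sum_ofFn]
      rw [map_sum, Finsupp.finset_sum_apply]
      simp only [Function.comp_apply]
      have hterm : ∀ r : Fin k,
          (b.repr (∑ i0 ∈ (A r).filter (fun i0 : Fin m => (i0 : ℕ) ≤ (j : ℕ)),
            (t i0 - s i0) • b i0)) j
          = if j ∈ A r then t j - s j else 0 := by
        intro r
        rw [map_sum, Finsupp.finset_sum_apply]
        have hterm2 : ∀ i0 : Fin m, (b.repr ((t i0 - s i0) • b i0)) j
            = if i0 = j then t i0 - s i0 else 0 := by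
          intro i0
          rw [map_smul]
          simp [Module.Basis.repr_self, Finsupp.single_apply]
          split <;> simp
        rw [Finset.sum_congr rfl fun i0 _ => hterm2 i0]
        rw [Finset.sum_ite_eq' _ j (fun i0 => t i0 - s i0)]
        by_cases h : j ∈ A r
        · simp [h]
        · simp [h]
      rw [Finset.sum_congr rfl fun r _ => hterm r]
      obtain ⟨r₀, hr₀⟩ := hcover j
      rw [Finset.sum_eq_single r₀]
      · rw [if_pos hr₀]
        have hsj : s j = 0 := by rw [hsdef]; simp
        rw [hsj, sub_zero]
      · intro r _ hne
        rw [if_neg]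
        intro hc
        exact (Finset.disjoint_left.mp (hdisj r r₀ hne) hc) hr₀
      · intro hc
        exact absurd (Finset.mem_univ _) hc
    rw [← hΦL t, ← hΦL s, hD] at hcoord
    have hPs : MvPolynomial.eval t (P j) = b.repr (Φ s) j := by
      rw [hΦL s, hS s j, hPdef]
      simp only
      rw [BCHaux.eval_aeval_mv]
      apply BCHaux.eval_congr_vars
      intro i _
      by_cases h : (j : ℕ) < (i : ℕ)
      · rw [if_pos h, MvPolynomial.eval_X, hsdef]
        simp only
        rw [if_pos h]
      · rw [if_neg h, map_zero, hsdef]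
        simp only
        rw [if_neg h]
    rw [hPs]
    linarith [hcoord]
  have hsum : ∀ t : Fin m → ℝ, Φ t = ∑ j, (t j + MvPolynomial.eval t (P j)) • b j := by
    intro t
    conv_lhs => rw [← b.sum_repr (Φ t)]
    apply Finset.sum_congr rfl
    intro j _
    rw [hrepr t j]
  have hqeval : ∀ (c : Fin m → ℝ) (j : Fin m), MvPolynomial.eval c (BCHaux.qAux m P j)
      = c j - MvPolynomial.eval
          (fun i : Fin m => if (j : ℕ) < (i : ℕ)
            then MvPolynomial.eval c (BCHaux.qAux m P i) else 0) (P j) := by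
    intro c j
    conv_lhs => rw [BCHaux.qAux]
    rw [map_sub, MvPolynomial.eval_X, BCHaux.eval_bind₁]
    congr 1
    apply BCHaux.eval_congr_vars
    intro i _
    by_cases h : (j : ℕ) < (i : ℕ)
    · rw [dif_pos h, if_pos h]
    · rw [dif_neg h, if_neg h, map_zero]
  have INV1 : ∀ (t : Fin m → ℝ) (j : Fin m),
      MvPolynomial.eval (fun i => t i + MvPolynomial.eval t (P i)) (BCHaux.qAux m P j) = t j := by
    intro t
    suffices h : ∀ (d : ℕ) (j : Fin m), m - (j : ℕ) ≤ d →
        MvPolynomial.eval (fun i => t i + MvPolynomial.eval t (P i)) (BCHaux.qAux m P j) = t j by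
      intro j
      exact h m j (by omega)
    intro d
    induction d with
    | zero =>
      intro j hj
      have := j.isLt
      omega
    | succ d ihd =>
      intro j hj
      rw [hqeval]
      have hinner : MvPolynomial.eval
          (fun i : Fin m => if (j : ℕ) < (i : ℕ)
            then MvPolynomial.eval (fun i' => t i' + MvPolynomial.eval t (P i'))
              (BCHaux.qAux m P i) else 0) (P j)
          = MvPolynomial.eval t (P j) := by
        apply BCHaux.eval_congr_vars
        intro i hi
        have hji := hPvars j i hi
        rw [if_pos hji, ihd i (by have := i.isLt; omega)]
      rw [hinner]
      ring
  set ψ : g → (Fin m → ℝ) :=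
    fun Y j => MvPolynomial.eval (fun i => b.repr Y i) (BCHaux.qAux m P j) with hψdef
  have hRI : ∀ Y, Φ (ψ Y) = Y := by
    intro Y
    have hco : ∀ j : Fin m, ψ Y j + MvPolynomial.eval (ψ Y) (P j) = b.repr Y j := by
      intro j
      have h1 : ψ Y j = b.repr Y j - MvPolynomial.eval
          (fun i : Fin m => if (j : ℕ) < (i : ℕ) then ψ Y i else 0) (P j) := by
        rw [hψdef]
        simp only
        rw [hqeval]
      have h2 : MvPolynomial.eval (ψ Y) (P j) = MvPolynomial.eval
          (fun i : Fin m => if (j : ℕ) < (i : ℕ) then ψ Y i else 0) (P j) := by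
        apply BCHaux.eval_congr_vars
        intro i hi
        rw [if_pos (hPvars j i hi)]
      rw [h1, h2]
      ring
    rw [hsum (ψ Y)]
    rw [Finset.sum_congr rfl (fun j _ => by rw [hco j])]
    exact b.sum_repr Y
  have hLI : ∀ t, ψ (Φ t) = t := by
    intro t
    funext j
    rw [hψdef]
    simp only
    have harg : (fun i => b.repr (Φ t) i) = fun i => t i + MvPolynomial.eval t (P i) := by
      funext i
      exact hrepr t i
    rw [harg]
    exact INV1 t j
  have hbij : Function.Bijective Φ :=
    ⟨Function.LeftInverse.injective hLI, fun Y => ⟨ψ Y, hRI Y⟩⟩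
  refine ⟨⟨P, hPvars, hsum⟩, hbij, ⟨BCHaux.qAux m P, ?_⟩⟩
  intro Y j
  have hY : Φ (Function.invFun Φ Y) = Y := Function.rightInverse_invFun hbij.2 Y
  have h2 : Function.invFun Φ Y = ψ Y := hbij.1 (by rw [hY, hRI Y])
  rw [h2, hψdef]
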